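/- For all n ≥ 1, the difference p(n+1) - p(n) is either 1 or 2. -/
import Mathlib


/-- Wythoff sequences: `p 1 = 1`, `q n = p n + n` for `n ≥ 1`, and `p (n+1)` is the
smallest positive integer not contained in `U_n = {p 1, …, p n, q 1, …, q n}`. -/

theorem stmt_3 (p q : ℕ → ℕ)
    (hp1 : p 1 = 1)
    (hq : ∀ n, 1 ≤ n → q n = p n + n)
    (hmin : ∀ n, 1 ≤ n →
      IsLeast {m : ℕ | 0 < m ∧ ∀ i, 1 ≤ i → i ≤ n → m ≠ p i ∧ m ≠ q i} (p (n + 1))) :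
    ∀ n, 1 ≤ n → p (n + 1) = p n + 1 ∨ p (n + 1) = p n + 2 := by
  have hstep : ∀ n, 1 ≤ n → p n < p (n + 1) := by
    intro n hn
    obtain ⟨⟨hpos, hne⟩, hlb⟩ := hmin n hn
    rcases eq_or_lt_of_le hn with h1 | h2
    · have h := (hne 1 le_rfl (by omega)).1
      have hpn : p n = 1 := by rw [← h1, hp1]
      omega
    · by_contra hcon
      push_neg at hcon
      have hne' := (hne n hn le_rfl).1
      obtain ⟨_, hlb'⟩ := hmin (n - 1) (by omega)
      have hle : p ((n - 1) + 1) ≤ p (n + 1) :=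
        hlb' ⟨hpos, fun i hi1 hi2 => hne i hi1 (by omega)⟩
      rw [Nat.sub_add_cancel (by omega)] at hle
      omega
  have hmono : ∀ i j, 1 ≤ i → i < j → p i < p j := by
    intro i j hi hij
    induction j with
    | zero => omega
    | succ k ih =>
      rcases Nat.lt_or_ge i k with h | h
      · exact lt_trans (ih h) (hstep k (by omega))
      · have : i = k := by omega
        subst this; exact hstep i hi
  intro n hn
  obtain ⟨⟨hpos, hne⟩, hlb⟩ := hmin n hn
  have hgt : p n < p (n + 1) := hstep n hn
  have hple : ∀ i, 1 ≤ i → i ≤ n → p i ≤ p n := by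
    intro i hi hin
    rcases eq_or_lt_of_le hin with h | h
    · rw [h]
    · exact le_of_lt (hmono i n hi h)
  by_cases hc : ∀ i, 1 ≤ i → i ≤ n → p n + 1 ≠ p i ∧ p n + 1 ≠ q i
  · left
    have := hlb ⟨by omega, hc⟩
    omega
  · push_neg at hc
    obtain ⟨i, hi1, hin, hor⟩ := hc
    have hqi : p n + 1 = q i := by
      by_cases hpi : p n + 1 = p i
      · have := hple i hi1 hin; omega
      · exact hor hpi
    right
    have hcand : 0 < p n + 2 ∧ ∀ j, 1 ≤ j → j ≤ n → p n + 2 ≠ p j ∧ p n + 2 ≠ q j := by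
      refine ⟨by omega, fun j hj1 hjn => ⟨?_, ?_⟩⟩
      · have := hple j hj1 hjn; omega
      · rw [hq j hj1]
        intro heq
        rw [hq i hi1] at hqi
        rcases lt_trichotomy j i with h | h | h
        · have := hmono j i hj1 h; omega
        · subst h; omega
        · have := hmono i j hi1 h; omega
    have H := hlb hcand
    have hne1 : p (n + 1) ≠ p n + 1 := by
      rw [hqi]; exact (hne i hi1 hin).2
    omega
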